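/- Let σ > 0 and α ∈ ℝ, and define J_{α,σ}(s) = (σ/3)·(max{‖s‖, -α/σ})³ + (α/2)·(max{‖s‖, -α/σ})². Then J_{α,σ} is continuously differentiable on ℝⁿ with gradient ∇J_{α,σ}(s) = [σ‖s‖ + α]₊ · s, where [a]₊ = max{a,0}. -/

import Mathlib

open Set

lemma gderiv (σ α : ℝ) (hσ : 0 < σ) (t : ℝ) :
    HasDerivAt (fun t : ℝ => σ / 3 * (max t (-α / σ)) ^ 3 + α / 2 * (max t (-α / σ)) ^ 2)
      (max (σ * t + α) 0 * t) t := by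
  set c := -α / σ with hc
  have hσc : σ * c + α = 0 := by rw [hc]; field_simp; ring
  have hphi : ∀ u : ℝ, HasDerivAt (fun t : ℝ => σ / 3 * t ^ 3 + α / 2 * t ^ 2)
      (σ * u ^ 2 + α * u) u := by
    intro u
    have := ((hasDerivAt_pow 3 u).const_mul (σ / 3)).add ((hasDerivAt_pow 2 u).const_mul (α / 2))
    refine this.congr_deriv ?_
    ring
  rcases lt_trichotomy t c with h | h | h
  · -- t < c : locally constant
    have hev : (fun t : ℝ => σ / 3 * (max t c) ^ 3 + α / 2 * (max t c) ^ 2)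
        =ᶠ[nhds t] fun _ => σ / 3 * c ^ 3 + α / 2 * c ^ 2 := by
      filter_upwards [eventually_lt_nhds h] with u hu
      rw [max_eq_right hu.le]
    have h0 : max (σ * t + α) 0 * t = 0 := by
      have : σ * t + α < 0 := by nlinarith
      rw [max_eq_right this.le, zero_mul]
    rw [h0]
    exact (hasDerivAt_const t _).congr_of_eventuallyEq hev
  · -- t = c
    have hta : σ * t + α = 0 := by rw [h]; exact hσc
    have h0 : max (σ * t + α) 0 * t = 0 := by rw [hta]; simp
    rw [h0]
    have hIic : HasDerivWithinAt (fun t : ℝ => σ / 3 * (max t c) ^ 3 + α / 2 * (max t c) ^ 2)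
        0 (Iic t) t := by
      apply (hasDerivWithinAt_const t _ (σ / 3 * c ^ 3 + α / 2 * c ^ 2)).congr
      · intro u hu; rw [max_eq_right ((mem_Iic.mp hu).trans h.le)]
      · rw [h, max_self]
    have hIci : HasDerivWithinAt (fun t : ℝ => σ / 3 * (max t c) ^ 3 + α / 2 * (max t c) ^ 2)
        0 (Ici t) t := by
      have h1 : σ * t ^ 2 + α * t = 0 := by
        calc σ * t ^ 2 + α * t = t * (σ * t + α) := by ring
        _ = 0 := by rw [hta]; ring
      have base : HasDerivWithinAt (fun t : ℝ => σ / 3 * t ^ 3 + α / 2 * t ^ 2) 0 (Ici t) t :=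
        h1 ▸ (hphi t).hasDerivWithinAt
      exact base.congr (fun u hu => by rw [max_eq_left (h.symm.le.trans (mem_Ici.mp hu))])
        (by rw [h, max_self])
    have := hIic.union hIci
    rwa [Iic_union_Ici, hasDerivWithinAt_univ] at this
  · -- t > c
    have hev : (fun t : ℝ => σ / 3 * (max t c) ^ 3 + α / 2 * (max t c) ^ 2)
        =ᶠ[nhds t] fun t => σ / 3 * t ^ 3 + α / 2 * t ^ 2 := by
      filter_upwards [eventually_gt_nhds h] with u hu
      rw [max_eq_left hu.le]
    have hpos : 0 < σ * t + α := by nlinarith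
    have h0 : max (σ * t + α) 0 * t = σ * t ^ 2 + α * t := by
      rw [max_eq_left hpos.le]; ring
    rw [h0]
    exact (hphi t).congr_of_eventuallyEq hev

theorem stmt_4 (n : ℕ) (σ α : ℝ) (hσ : 0 < σ) :
    ContDiff ℝ 1
      (fun s : EuclideanSpace ℝ (Fin n) =>
        σ / 3 * (max ‖s‖ (-α / σ)) ^ 3 + α / 2 * (max ‖s‖ (-α / σ)) ^ 2) ∧
    ∀ s : EuclideanSpace ℝ (Fin n),
      HasGradientAt
        (fun s : EuclideanSpace ℝ (Fin n) =>
          σ / 3 * (max ‖s‖ (-α / σ)) ^ 3 + α / 2 * (max ‖s‖ (-α / σ)) ^ 2)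
        ((max (σ * ‖s‖ + α) 0) • s) s := by
  set E := EuclideanSpace ℝ (Fin n)
  set g : ℝ → ℝ := fun t => σ / 3 * (max t (-α / σ)) ^ 3 + α / 2 * (max t (-α / σ)) ^ 2 with hg
  set g' : ℝ → ℝ := fun t => max (σ * t + α) 0 * t with hg'
  have hgd : ∀ t, HasDerivAt g (g' t) t := gderiv σ α hσ
  have key : ∀ s : E, HasGradientAt (fun s : E => g ‖s‖) ((max (σ * ‖s‖ + α) 0) • s) s := by
    intro s
    by_cases hs : s = 0
    · subst hs
      rw [hasGradientAt_iff_hasFDerivAt]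
      have h0 : (InnerProductSpace.toDual ℝ E) (max (σ * ‖(0:E)‖ + α) 0 • (0:E)) = 0 := by
        simp
      rw [h0]
      rw [hasFDerivAt_iff_isLittleO_nhds_zero]
      rw [Asymptotics.isLittleO_iff]
      intro ε hε
      -- continuity of g' at 0 where g' 0 = 0
      have hg'0 : g' 0 = 0 := by simp [hg']
      have hcont : ContinuousAt g' 0 := by
        apply Continuous.continuousAt; fun_prop
      have htend : Filter.Tendsto g' (nhds 0) (nhds 0) := by
        have := hcont.tendsto; rwa [hg'0] at this
      have hev : ∀ᶠ t in nhds (0:ℝ), |g' t| < ε := by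
        filter_upwards [Metric.tendsto_nhds.mp htend ε hε] with t ht
        simpa [Real.dist_eq] using ht
      rcases Metric.eventually_nhds_iff.mp hev with ⟨δ, hδ, hδε⟩
      have : ∀ᶠ x : E in nhds 0, ‖x‖ < δ := by
        have := Metric.ball_mem_nhds (0:E) hδ
        filter_upwards [this] with x hx; simpa using hx
      filter_upwards [this] with x hx
      simp only [ContinuousLinearMap.zero_apply, zero_add, sub_zero]
      rcases eq_or_ne x 0 with rfl | hx0
      · simp
      · have hxpos : 0 < ‖x‖ := norm_pos_iff.mpr hx0
        obtain ⟨ξ, hξ, hξeq⟩ := exists_hasDerivAt_eq_slope g g' hxpos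
          (fun t _ => (hgd t).continuousAt.continuousWithinAt) (fun t _ => hgd t)
        have hξδ : |ξ| < δ := by
          rw [abs_of_pos hξ.1]; exact hξ.2.trans hx
        have := hδε (by simpa [Real.dist_eq] using hξδ)
        have heq : g ‖x‖ - g ‖(0:E)‖ = g' ξ * ‖x‖ := by
          rw [norm_zero]
          rw [hξeq, sub_zero, div_mul_cancel₀ _ hxpos.ne']
        rw [Real.norm_eq_abs, heq, abs_mul, abs_of_pos hxpos]
        exact mul_le_mul_of_nonneg_right this.le hxpos.le
    · -- s ≠ 0
      have hns : (0:ℝ) < ‖s‖ := norm_pos_iff.mpr hs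
      have h1 : HasFDerivAt (fun x : E => ‖x‖ ^ 2) (2 • (innerSL ℝ s)) s :=
        (hasStrictFDerivAt_norm_sq s).hasFDerivAt
      have h2 : HasDerivAt Real.sqrt (1 / (2 * ‖s‖)) (‖s‖ ^ 2) := by
        have := Real.hasDerivAt_sqrt (x := ‖s‖ ^ 2) (by positivity)
        rwa [Real.sqrt_sq (norm_nonneg s)] at this
      have h3 : HasDerivAt g (g' ‖s‖) (Real.sqrt (‖s‖ ^ 2)) := by
        rw [Real.sqrt_sq (norm_nonneg s)]; exact hgd ‖s‖
      have h23 : HasDerivAt (fun u => g (Real.sqrt u)) (g' ‖s‖ * (1 / (2 * ‖s‖))) (‖s‖ ^ 2) :=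
        h3.comp _ h2
      have H : HasFDerivAt (fun x : E => g (Real.sqrt (‖x‖ ^ 2)))
          ((g' ‖s‖ * (1 / (2 * ‖s‖))) • (2 • (innerSL ℝ s))) s :=
        by have := h23.comp_hasFDerivAt s h1; exact this
      have Hfun : (fun x : E => g (Real.sqrt (‖x‖ ^ 2))) = fun x : E => g ‖x‖ := by
        funext x; rw [Real.sqrt_sq (norm_nonneg x)]
      rw [Hfun] at H
      rw [hasGradientAt_iff_hasFDerivAt]
      refine H.congr_fderiv ?_
      ext y
      rw [InnerProductSpace.toDual_apply_apply]
      simp only [ContinuousLinearMap.smul_apply, ContinuousLinearMap.smul_apply,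
        innerSL_apply_apply, real_inner_smul_left, smul_eq_mul]
      rw [hg']
      field_simp
      ring
  constructor
  · rw [contDiff_one_iff_fderiv]
    constructor
    · exact fun s => (key s).hasFDerivAt.differentiableAt
    · have hfd : (fderiv ℝ fun s : E => g ‖s‖) =
          fun s => (InnerProductSpace.toDual ℝ E) (max (σ * ‖s‖ + α) 0 • s) := by
        funext s
        exact ((hasGradientAt_iff_hasFDerivAt.mp (key s)).fderiv)
      rw [hfd]
      exact (InnerProductSpace.toDual ℝ E).continuous.comp
        (by fun_prop : Continuous fun s : E => max (σ * ‖s‖ + α) 0 • s)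
  · exact key
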